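/- Let E ∈ ℝ^{d'×d} be a column-stochastic matrix and let p ∈ Δ^{d-1}, q ∈ Δ^{d'-1} be probability vectors. Then the following are equivalent: (2) there exist vectors a ∈ ℝ^{d'} and b ∈ ℝ^{d} with all entries positive such that the matrix D_a E D_b has row sums equal to q and column sums equal to p; (3) there exists a matrix B ∈ ℝ^{d'×d} with nonnegative entries, row sums equal to q and column sums equal to p, such that B_{y,x} > 0 whenever E_{y,x} > 0 and B_{y,x} = 0 whenever E_{y,x} = 0. -/

import Mathlib

open Matrix BigOperators

/-- A column-stochastic matrix: nonnegative entries, each column sums to 1. -/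
def ColStochastic {d' d : ℕ} (E : Matrix (Fin d') (Fin d) ℝ) : Prop :=
  (∀ y x, 0 ≤ E y x) ∧ ∀ x, ∑ y, E y x = 1

/-- A probability vector: nonnegative entries summing to 1. -/
def ProbVec {d : ℕ} (p : Fin d → ℝ) : Prop :=
  (∀ x, 0 ≤ p x) ∧ ∑ x, p x = 1

/-- Key convexity inequality: `A e^s - C s` is bounded below when `A, C > 0`. -/
lemma sinkhorn_key_ineq (A C s : ℝ) (hA : 0 < A) (hC : 0 < C) :
    C * (1 + Real.log (A / C)) ≤ A * Real.exp s - C * s := by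
  have h1 : A * Real.exp s = C * Real.exp (s + Real.log (A / C)) := by
    rw [Real.exp_add, Real.exp_log (by positivity)]
    field_simp
  have h2 : (s + Real.log (A / C)) + 1 ≤ Real.exp (s + Real.log (A / C)) :=
    Real.add_one_le_exp _
  nlinarith [mul_le_mul_of_nonneg_left h2 hC.le]

/-- Sublevel sets of `s ↦ A e^s - C s` are bounded. -/
lemma sinkhorn_bnd (A C D s : ℝ) (hA : 0 < A) (hC : 0 < C)
    (h : A * Real.exp s - C * s ≤ D) :
    s ∈ Set.Icc (-(max (D / C) (2 * (D - C * (1 + Real.log (A / (2 * C)))) / A)))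
      (max (D / C) (2 * (D - C * (1 + Real.log (A / (2 * C)))) / A)) := by
  constructor
  · have h1 : -D ≤ C * s := by nlinarith [Real.exp_pos s]
    have h2 : -(D / C) ≤ s := by
      rw [← neg_div, div_le_iff₀ hC]
      linarith
    have h3 : D / C ≤ max (D / C) (2 * (D - C * (1 + Real.log (A / (2 * C)))) / A) :=
      le_max_left _ _
    linarith
  · have hkey := sinkhorn_key_ineq (A / 2) C s (by positivity) hC
    have hm' : C * (1 + Real.log (A / (2 * C))) = C * (1 + Real.log (A / 2 / C)) := by
      rw [div_div]
    rw [← hm'] at hkey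
    have h2 : A / 2 * Real.exp s ≤ D - C * (1 + Real.log (A / (2 * C))) := by linarith
    have h3 : s < Real.exp s := by linarith [Real.add_one_le_exp s]
    have h4 : s ≤ 2 * (D - C * (1 + Real.log (A / (2 * C)))) / A := by
      rw [le_div_iff₀ hA]
      nlinarith [Real.exp_pos s]
    exact h4.trans (le_max_right _ _)

theorem sinkhorn_iff_pattern_matrix {d' d : ℕ}
    (E : Matrix (Fin d') (Fin d) ℝ) (hE : ColStochastic E)
    (p : Fin d → ℝ) (hp : ProbVec p) (q : Fin d' → ℝ) (hq : ProbVec q) :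
    (∃ (a : Fin d' → ℝ) (b : Fin d → ℝ), (∀ y, 0 < a y) ∧ (∀ x, 0 < b x) ∧
      (Matrix.diagonal a * E * Matrix.diagonal b) *ᵥ (fun _ => 1) = q ∧
      (Matrix.diagonal a * E * Matrix.diagonal b)ᵀ *ᵥ (fun _ => 1) = p) ↔
    (∃ B : Matrix (Fin d') (Fin d) ℝ, (∀ y x, 0 ≤ B y x) ∧
      (B *ᵥ (fun _ => 1) = q) ∧ (Bᵀ *ᵥ (fun _ => 1) = p) ∧
      (∀ y x, 0 < E y x → 0 < B y x) ∧ (∀ y x, E y x = 0 → B y x = 0)) := by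
  classical
  constructor
  · rintro ⟨a, b, ha, hb, hrow, hcol⟩
    refine ⟨Matrix.diagonal a * E * Matrix.diagonal b, ?_, hrow, hcol, ?_, ?_⟩
    · intro y x
      simp only [Matrix.mul_diagonal, Matrix.diagonal_mul]
      exact mul_nonneg (mul_nonneg (ha y).le (hE.1 y x)) (hb x).le
    · intro y x hEx
      simp only [Matrix.mul_diagonal, Matrix.diagonal_mul]
      exact mul_pos (mul_pos (ha y) hEx) (hb x)
    · intro y x hEx
      simp [Matrix.mul_diagonal, Matrix.diagonal_mul, hEx]
  · rintro ⟨B, hB0, hBq, hBp, hposB, hzero⟩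
    have hq' : ∀ y, ∑ x, B y x = q y := by
      intro y; have := congrFun hBq y
      simpa [Matrix.mulVec, dotProduct] using this
    have hp' : ∀ x, ∑ y, B y x = p x := by
      intro x; have := congrFun hBp x
      simpa [Matrix.mulVec, dotProduct, Matrix.transpose_apply] using this
    -- the edge type
    set ι := {z : Fin d' × Fin d // E z.1 z.2 ≠ 0} with hι
    have hEpos : ∀ e : ι, 0 < E e.1.1 e.1.2 :=
      fun e => lt_of_le_of_ne (hE.1 _ _) (Ne.symm e.2)
    have hBpos : ∀ e : ι, 0 < B e.1.1 e.1.2 := fun e => hposB _ _ (hEpos e)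
    -- the linear map (α, β) ↦ (α_y + β_x)_{(y,x) ∈ edges}
    let L : ((Fin d' → ℝ) × (Fin d → ℝ)) →ₗ[ℝ] (ι → ℝ) :=
      { toFun := fun v e => v.1 e.1.1 + v.2 e.1.2
        map_add' := fun u v => by funext e; simp [Prod.fst_add, Prod.snd_add]; ring
        map_smul' := fun c v => by funext e; simp [Prod.smul_fst, Prod.smul_snd]; ring }
    -- the dual objective
    let G : (ι → ℝ) → ℝ := fun s =>
      ∑ e : ι, (E e.1.1 e.1.2 * Real.exp (s e) - B e.1.1 e.1.2 * s e)
    have hGcont : Continuous G := by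
      apply continuous_finset_sum
      intro e _
      exact (continuous_const.mul (Real.continuous_exp.comp (continuous_apply e))).sub
        (continuous_const.mul (continuous_apply e))
    -- lower bound of each term
    set μ : ι → ℝ := fun e =>
      B e.1.1 e.1.2 * (1 + Real.log (E e.1.1 e.1.2 / B e.1.1 e.1.2)) with hμ
    have hμle : ∀ (s : ι → ℝ) (e : ι),
        μ e ≤ E e.1.1 e.1.2 * Real.exp (s e) - B e.1.1 e.1.2 * s e :=
      fun s e => sinkhorn_key_ineq _ _ _ (hEpos e) (hBpos e)
    -- per-edge bound on the sublevel set
    set C : ι → ℝ := fun e => G 0 - ∑ e' ∈ Finset.univ.erase e, μ e' with hC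
    have hterm : ∀ s : ι → ℝ, G s ≤ G 0 → ∀ e : ι,
        E e.1.1 e.1.2 * Real.exp (s e) - B e.1.1 e.1.2 * s e ≤ C e := by
      intro s hs e
      have h1 : ∑ e' ∈ Finset.univ.erase e, μ e' ≤
          ∑ e' ∈ Finset.univ.erase e, (E e'.1.1 e'.1.2 * Real.exp (s e') - B e'.1.1 e'.1.2 * s e') :=
        Finset.sum_le_sum fun e' _ => hμle s e'
      have h2 : (E e.1.1 e.1.2 * Real.exp (s e) - B e.1.1 e.1.2 * s e) +
          ∑ e' ∈ Finset.univ.erase e, (E e'.1.1 e'.1.2 * Real.exp (s e') - B e'.1.1 e'.1.2 * s e')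
          = G s :=
        Finset.add_sum_erase Finset.univ
          (fun e' : ι => E e'.1.1 e'.1.2 * Real.exp (s e') - B e'.1.1 e'.1.2 * s e')
          (Finset.mem_univ e)
      simp only [hC]
      linarith
    -- per-edge radius bound
    set R : ι → ℝ := fun e => max (C e / B e.1.1 e.1.2)
      (2 * (C e - B e.1.1 e.1.2 * (1 + Real.log (E e.1.1 e.1.2 / (2 * B e.1.1 e.1.2)))) /
        E e.1.1 e.1.2) with hR
    have hbox : ∀ s : ι → ℝ, G s ≤ G 0 → ∀ e : ι, s e ∈ Set.Icc (-(R e)) (R e) := by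
      intro s hs e
      exact sinkhorn_bnd _ _ _ _ (hEpos e) (hBpos e) (hterm s hs e)
    -- compactness of the sublevel set intersected with the range
    set S : Submodule ℝ (ι → ℝ) := LinearMap.range L with hS
    set K : Set (ι → ℝ) := (S : Set (ι → ℝ)) ∩ G ⁻¹' Set.Iic (G 0) with hK
    have hKclosed : IsClosed K :=
      (S.closed_of_finiteDimensional).inter (isClosed_Iic.preimage hGcont)
    have hKsub : K ⊆ Set.univ.pi fun e => Set.Icc (-(R e)) (R e) := by
      intro s hs
      exact Set.mem_univ_pi.mpr fun e => hbox s hs.2 e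
    have hKcomp : IsCompact K :=
      (isCompact_univ_pi fun e => isCompact_Icc).of_isClosed_subset hKclosed hKsub
    have h0K : (0 : ι → ℝ) ∈ K := ⟨S.zero_mem, Set.mem_preimage.mpr (Set.mem_Iic.mpr le_rfl)⟩
    obtain ⟨s0, hs0K, hs0min⟩ := hKcomp.exists_isMinOn ⟨0, h0K⟩ hGcont.continuousOn
    obtain ⟨v0, hv0⟩ := hs0K.1
    have hminS : ∀ v, G s0 ≤ G (L v) := by
      intro v
      by_cases hc : G (L v) ≤ G 0
      · exact hs0min ⟨LinearMap.mem_range_self L v, hc⟩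
      · have h5 : G s0 ≤ G 0 := hs0min h0K
        push_neg at hc
        linarith
    -- gradient is zero in every direction
    have hgrad : ∀ w : (Fin d' → ℝ) × (Fin d → ℝ),
        ∑ e : ι, (w.1 e.1.1 + w.2 e.1.2) *
          (E e.1.1 e.1.2 * Real.exp (s0 e) - B e.1.1 e.1.2) = 0 := by
      intro w
      set f : ℝ → ℝ := fun t => G (L (v0 + t • w)) with hf
      have hfe : ∀ t, f t = ∑ e : ι,
          (E e.1.1 e.1.2 * Real.exp (s0 e + (w.1 e.1.1 + w.2 e.1.2) * t)
            - B e.1.1 e.1.2 * (s0 e + (w.1 e.1.1 + w.2 e.1.2) * t)) := by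
        intro t
        apply Finset.sum_congr rfl
        intro e _
        have : L (v0 + t • w) e = s0 e + (w.1 e.1.1 + w.2 e.1.2) * t := by
          rw [map_add, _root_.map_smul, ← hv0]
          simp [L]
          ring
        rw [this]
      have hder : HasDerivAt f (∑ e : ι, (w.1 e.1.1 + w.2 e.1.2) *
          (E e.1.1 e.1.2 * Real.exp (s0 e) - B e.1.1 e.1.2)) 0 := by
        have h1 : HasDerivAt (fun t => ∑ e : ι,
            (E e.1.1 e.1.2 * Real.exp (s0 e + (w.1 e.1.1 + w.2 e.1.2) * t)
              - B e.1.1 e.1.2 * (s0 e + (w.1 e.1.1 + w.2 e.1.2) * t)))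
            (∑ e : ι, (w.1 e.1.1 + w.2 e.1.2) *
              (E e.1.1 e.1.2 * Real.exp (s0 e) - B e.1.1 e.1.2)) 0 := by
          apply HasDerivAt.fun_sum
          intro e _
          set c := w.1 e.1.1 + w.2 e.1.2 with hc'
          have hlin : HasDerivAt (fun t : ℝ => s0 e + c * t) c 0 := by
            simpa using ((hasDerivAt_id (0 : ℝ)).const_mul c).const_add (s0 e)
          have H := (hlin.exp.const_mul (E e.1.1 e.1.2)).fun_sub (hlin.const_mul (B e.1.1 e.1.2))
          convert H using 1
          simp
          ring
        have : f = fun t => ∑ e : ι,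
            (E e.1.1 e.1.2 * Real.exp (s0 e + (w.1 e.1.1 + w.2 e.1.2) * t)
              - B e.1.1 e.1.2 * (s0 e + (w.1 e.1.1 + w.2 e.1.2) * t)) := funext hfe
        rw [this]
        exact h1
      have hloc : IsLocalMin f 0 := by
        apply Filter.Eventually.of_forall
        intro t
        have h0 : f 0 = G s0 := by
          simp only [hf, zero_smul, add_zero, hv0]
        rw [h0]
        exact hminS _
      have := hder.deriv
      rw [hloc.deriv_eq_zero] at this
      exact this.symm
    -- rewrite s0 in terms of v0
    have hs0e : ∀ e : ι, s0 e = v0.1 e.1.1 + v0.2 e.1.2 := by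
      intro e; rw [← hv0]; rfl
    -- convert edge sums to full sums
    have hsum : ∀ F : Fin d' × Fin d → ℝ, (∀ z, E z.1 z.2 = 0 → F z = 0) →
        ∑ e : ι, F e.1 = ∑ z : Fin d' × Fin d, F z := by
      intro F hF
      rw [← Finset.sum_subtype (Finset.univ.filter fun z => E z.1 z.2 ≠ 0) (by simp) F]
      exact Finset.sum_filter_of_ne fun z _ hz => fun h0 => hz (hF z h0)
    refine ⟨fun y => Real.exp (v0.1 y), fun x => Real.exp (v0.2 x),
      fun y => Real.exp_pos _, fun x => Real.exp_pos _, ?_, ?_⟩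
    · funext y
      have h1 := hgrad (Pi.single y 1, 0)
      have h4 : ∑ e : ι, (((Pi.single y 1 : Fin d' → ℝ)) e.1.1 + ((0 : Fin d → ℝ)) e.1.2) *
          (E e.1.1 e.1.2 * Real.exp (s0 e) - B e.1.1 e.1.2)
          = ∑ z : Fin d' × Fin d, (Pi.single y 1 : Fin d' → ℝ) z.1 *
            (E z.1 z.2 * Real.exp (v0.1 z.1 + v0.2 z.2) - B z.1 z.2) := by
        refine Eq.trans ?_ (hsum (fun z => (Pi.single y 1 : Fin d' → ℝ) z.1 *
            (E z.1 z.2 * Real.exp (v0.1 z.1 + v0.2 z.2) - B z.1 z.2))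
            (fun z hz => by simp [hz, hzero _ _ hz]))
        refine Finset.sum_congr rfl fun e _ => ?_
        rw [hs0e e]
        simp
      have h5 : ∑ z : Fin d' × Fin d, (Pi.single y 1 : Fin d' → ℝ) z.1 *
          (E z.1 z.2 * Real.exp (v0.1 z.1 + v0.2 z.2) - B z.1 z.2) = 0 := h4.symm.trans h1
      rw [Fintype.sum_prod_type] at h5
      have h6 : ∑ y' : Fin d', ∑ x : Fin d, (Pi.single y 1 : Fin d' → ℝ) y' *
          (E y' x * Real.exp (v0.1 y' + v0.2 x) - B y' x)
          = ∑ x : Fin d, (E y x * Real.exp (v0.1 y + v0.2 x) - B y x) := by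
        have := Finset.sum_eq_single_of_mem
          (f := fun y' => ∑ x : Fin d, (Pi.single y 1 : Fin d' → ℝ) y' *
            (E y' x * Real.exp (v0.1 y' + v0.2 x) - B y' x))
          y (Finset.mem_univ y)
          (fun b _ hb => Finset.sum_eq_zero fun x _ => by simp [Pi.single_apply, hb])
        rw [this]
        refine Finset.sum_congr rfl fun x _ => ?_
        simp
      have h7 : ∑ x : Fin d, (E y x * Real.exp (v0.1 y + v0.2 x) - B y x) = 0 :=
        h6.symm.trans h5
      have h3 : ∑ x, E y x * Real.exp (v0.1 y + v0.2 x) = q y := by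
        rw [← hq' y]
        rw [Finset.sum_sub_distrib] at h7
        linarith
      rw [show q y = ∑ x, E y x * Real.exp (v0.1 y + v0.2 x) from h3.symm]
      simp only [Matrix.mulVec, dotProduct, Matrix.mul_diagonal, Matrix.diagonal_mul, mul_one]
      refine Finset.sum_congr rfl fun x _ => ?_
      rw [Real.exp_add]
      ring
    · funext x
      have h1 := hgrad (0, Pi.single x 1)
      have h4 : ∑ e : ι, (((0 : Fin d' → ℝ)) e.1.1 + ((Pi.single x 1 : Fin d → ℝ)) e.1.2) *
          (E e.1.1 e.1.2 * Real.exp (s0 e) - B e.1.1 e.1.2)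
          = ∑ z : Fin d' × Fin d, (Pi.single x 1 : Fin d → ℝ) z.2 *
            (E z.1 z.2 * Real.exp (v0.1 z.1 + v0.2 z.2) - B z.1 z.2) := by
        refine Eq.trans ?_ (hsum (fun z => (Pi.single x 1 : Fin d → ℝ) z.2 *
            (E z.1 z.2 * Real.exp (v0.1 z.1 + v0.2 z.2) - B z.1 z.2))
            (fun z hz => by simp [hz, hzero _ _ hz]))
        refine Finset.sum_congr rfl fun e _ => ?_
        rw [hs0e e]
        simp
      have h5 : ∑ z : Fin d' × Fin d, (Pi.single x 1 : Fin d → ℝ) z.2 *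
          (E z.1 z.2 * Real.exp (v0.1 z.1 + v0.2 z.2) - B z.1 z.2) = 0 := h4.symm.trans h1
      rw [Fintype.sum_prod_type] at h5
      have h6 : ∑ y' : Fin d', ∑ x' : Fin d, (Pi.single x 1 : Fin d → ℝ) x' *
          (E y' x' * Real.exp (v0.1 y' + v0.2 x') - B y' x')
          = ∑ y' : Fin d', (E y' x * Real.exp (v0.1 y' + v0.2 x) - B y' x) := by
        refine Finset.sum_congr rfl fun y' _ => ?_
        have := Finset.sum_eq_single_of_mem
          (f := fun x' => (Pi.single x 1 : Fin d → ℝ) x' *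
            (E y' x' * Real.exp (v0.1 y' + v0.2 x') - B y' x'))
          x (Finset.mem_univ x)
          (fun b _ hb => by simp [Pi.single_apply, hb])
        rw [this]
        simp
      have h7 : ∑ y' : Fin d', (E y' x * Real.exp (v0.1 y' + v0.2 x) - B y' x) = 0 :=
        h6.symm.trans h5
      have h3 : ∑ y', E y' x * Real.exp (v0.1 y' + v0.2 x) = p x := by
        rw [← hp' x]
        rw [Finset.sum_sub_distrib] at h7
        linarith
      rw [show p x = ∑ y', E y' x * Real.exp (v0.1 y' + v0.2 x) from h3.symm]
      simp only [Matrix.mulVec, dotProduct, Matrix.transpose_apply, Matrix.mul_diagonal,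
        Matrix.diagonal_mul, mul_one]
      refine Finset.sum_congr rfl fun y' _ => ?_
      rw [Real.exp_add]
      ring
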